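/- Let G be a finite group and x, y commuting real elements of G with coprime conjugacy class sizes. Then xy is a real element of G. -/

import Mathlib

open Subgroup MulAction

/-- An element `x` of a group is *real* if it is conjugate to its inverse. -/
def IsRealEl (G : Type*) [Group G] (x : G) : Prop := ∃ g : G, g⁻¹ * x * g = x⁻¹

/-- The size of the conjugacy class of `x` in `G`. -/
noncomputable def clSize (G : Type*) [Group G] (x : G) : ℕ := Nat.card {y : G // IsConj x y}


/-- The conjugacy class size equals the index of the centralizer. -/
lemma clSize_eq_index {G : Type*} [Group G] (x : G) :
    Nat.card {y : G // IsConj x y} = (Subgroup.centralizer {x}).index := by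
  have e1 : {y : G // IsConj x y} ≃ orbit (ConjAct G) x :=
    Equiv.subtypeEquivRight fun y => by
      rw [ConjAct.mem_orbit_conjAct, isConj_comm]
  have e2 : orbit (ConjAct G) x ≃ ConjAct G ⧸ stabilizer (ConjAct G) x :=
    orbitEquivQuotientStabilizer (ConjAct G) x
  rw [Nat.card_congr (e1.trans e2), ← Subgroup.index_eq_card,
    Subgroup.centralizer_eq_comap_stabilizer]
  exact (Subgroup.index_comap_of_surjective _ ConjAct.toConjAct.surjective).symm

/-- If two subgroups of a finite group have coprime indices, every element is a
product `d * c` with `d ∈ D`, `c ∈ C`. -/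
lemma exists_mul_of_coprime_index {G : Type*} [Group G] [Finite G]
    (C D : Subgroup G) (hcop : Nat.Coprime C.index D.index) (z : G) :
    ∃ d ∈ D, ∃ c ∈ C, z = d * c := by
  have hCD : (C ⊓ D).index = C.index * D.index := by
    refine Nat.le_antisymm Subgroup.index_inf_le (Nat.le_of_dvd ?_ ?_)
    · exact Nat.pos_of_ne_zero (Subgroup.index_ne_zero_of_finite)
    · exact Nat.Coprime.mul_dvd_of_dvd_of_dvd hcop
        (Subgroup.index_dvd_of_le inf_le_left) (Subgroup.index_dvd_of_le inf_le_right)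
  have hrel : C.relIndex D = C.index := by
    have h1 : (C ⊓ D).relIndex D * D.index = (C ⊓ D).index :=
      Subgroup.relIndex_mul_index inf_le_right
    have h2 : (C ⊓ D).relIndex D = C.relIndex D := by
      rw [Subgroup.relIndex, Subgroup.relIndex, Subgroup.inf_subgroupOf_right]
    rw [h2, hCD] at h1
    exact Nat.eq_of_mul_eq_mul_right
      (Nat.pos_of_ne_zero (Subgroup.index_ne_zero_of_finite)) h1
  -- the natural map D ⧸ C.subgroupOf D → G ⧸ C
  let f : D ⧸ C.subgroupOf D → G ⧸ C :=
    Quotient.map' Subtype.val fun a b h => by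
      rw [QuotientGroup.leftRel_apply] at h ⊢
      exact h
  have hinj : Function.Injective f := by
    intro a b
    induction a using Quotient.inductionOn'
    induction b using Quotient.inductionOn'
    intro h
    simp only [f, Quotient.map'_mk''] at h
    have h' := QuotientGroup.leftRel_apply.mp (Quotient.exact' h)
    exact Quotient.sound' (QuotientGroup.leftRel_apply.mpr h')
  have hcard : Nat.card (D ⧸ C.subgroupOf D) = Nat.card (G ⧸ C) := by
    rw [← Subgroup.index_eq_card, ← Subgroup.index_eq_card]
    exact hrel
  have hsurj : Function.Surjective f :=
    ((Nat.bijective_iff_injective_and_card f).2 ⟨hinj, hcard⟩).2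
  obtain ⟨q, hq⟩ := hsurj (QuotientGroup.mk z)
  induction q using Quotient.inductionOn' with
  | h d =>
    have : (QuotientGroup.mk (d : G) : G ⧸ C) = QuotientGroup.mk z := hq
    rw [QuotientGroup.eq] at this
    exact ⟨d, d.2, (d : G)⁻¹ * z, this, by group⟩

theorem stmt_4 {G : Type*} [Group G] [Finite G] (x y : G) (hx : IsRealEl G x)
    (hy : IsRealEl G y) (hc : x * y = y * x)
    (hcop : Nat.Coprime (clSize G x) (clSize G y)) : IsRealEl G (x * y) := by
  obtain ⟨g, hg⟩ := hx
  obtain ⟨h, hh⟩ := hy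
  rw [clSize, clSize, clSize_eq_index, clSize_eq_index] at hcop
  obtain ⟨d, hd, c, hcC, hdc⟩ := exists_mul_of_coprime_index
    (Subgroup.centralizer {x}) (Subgroup.centralizer {y}) hcop (h⁻¹ * g)
  -- t := g * c⁻¹ = h * d inverts both x and y
  set t := g * c⁻¹ with ht
  have htd : t = h * d := by
    rw [ht]
    have : g = h * (d * c) := by rw [← hdc]; group
    rw [this]; group
  have hcx : c * x = x * c := (Subgroup.mem_centralizer_singleton_iff.1 hcC)
  have hdy : d * y = y * d := (Subgroup.mem_centralizer_singleton_iff.1 hd)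
  have htx : t⁻¹ * x * t = x⁻¹ := by
    have : t⁻¹ * x * t = c * (g⁻¹ * x * g) * c⁻¹ := by rw [ht]; group
    rw [this, hg]
    have : c * x⁻¹ = x⁻¹ * c := by
      have := congrArg (fun z => x⁻¹ * z * x⁻¹) hcx
      simpa [mul_assoc] using this.symm
    rw [this]; group
  have hty : t⁻¹ * y * t = y⁻¹ := by
    have : t⁻¹ * y * t = d⁻¹ * (h⁻¹ * y * h) * d := by rw [htd]; group
    rw [this, hh]
    have : d⁻¹ * y⁻¹ = y⁻¹ * d⁻¹ := by
      have := congrArg (fun z => z⁻¹) hdy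
      simpa [mul_comm, mul_assoc] using this.symm
    rw [this]; group
  refine ⟨t, ?_⟩
  have : t⁻¹ * (x * y) * t = (t⁻¹ * x * t) * (t⁻¹ * y * t) := by group
  rw [this, htx, hty, hc, mul_inv_rev]
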